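/- arXiv:1802.05750 — 2 statements merged into one kernel-verified Lean document; each statement's English description precedes it below -/
import Mathlib

section
/- Let κ be an uncountable regular cardinal with κ^{<κ}=κ, and let λ be a regular cardinal with κ < λ ≤ 2^κ. If L ⊆ 2^κ is a λ-κ-Lusin set, then |L| ≤ cov(M_κ). -/
noncomputable section

open Cardinal Set

namespace GenSp

/-- The index set: a canonical type of order type `κ.ord`. -/
abbrev I (κ : Cardinal.{0}) : Type := κ.ord.ToType

variable (κ : Cardinal.{0}) (A : Type)

/-- The generalized space `A^κ`. -/
abbrev Sp : Type := I κ → A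

/-- The basic clopen set `[x ↾ ξ]`: all functions agreeing with `x` below `ξ`. -/
def cyl (x : Sp κ A) (ξ : I κ) : Set (Sp κ A) := {y | ∀ β < ξ, y β = x β}

/-- The bounded topology on `A^κ`, generated by the basic clopen sets. -/
def bt : TopologicalSpace (Sp κ A) :=
  .generateFrom {S | ∃ x ξ, S = cyl κ A x ξ}

/-- Open in the bounded topology. -/
def OpenK (s : Set (Sp κ A)) : Prop := @IsOpen _ (bt κ A) s

/-- Closed in the bounded topology. -/
def ClosedK (s : Set (Sp κ A)) : Prop := @IsClosed _ (bt κ A) s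

/-- Nowhere dense in the bounded topology. -/
def NwdK (s : Set (Sp κ A)) : Prop := @IsNowhereDense _ (bt κ A) s

/-- κ-meagre: a union of (at most) κ nowhere dense sets. -/
def MeagreK (s : Set (Sp κ A)) : Prop :=
  ∃ f : I κ → Set (Sp κ A), (∀ i, NwdK κ A (f i)) ∧ s = ⋃ i, f i

/-- κ-strongly null set. -/
def SNullK (S : Set (Sp κ A)) : Prop :=
  ∀ ξ : I κ → I κ, ∃ a : I κ → Sp κ A, S ⊆ ⋃ α, cyl κ A (a α) (ξ α)

/-- Coordinatewise addition over `ℤ₂` (translation by `x`). -/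
def xadd (x y : Sp κ Bool) : Sp κ Bool := fun i => xor (x i) (y i)

/-- The covering number of the κ-meagre ideal. -/
def covM : Cardinal :=
  sInf {c | ∃ 𝒜 : Set (Set (Sp κ A)), #𝒜 = c ∧ (∀ s ∈ 𝒜, MeagreK κ A s) ∧ ⋃₀ 𝒜 = Set.univ}

/-- The cofinality of the κ-meagre ideal. -/
def cofM : Cardinal :=
  sInf {c | ∃ 𝒜 : Set (Set (Sp κ A)), #𝒜 = c ∧ (∀ s ∈ 𝒜, MeagreK κ A s) ∧
    ∀ t, MeagreK κ A t → ∃ s ∈ 𝒜, t ⊆ s}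

/-- κ is weakly compact: uncountable and with the partition property κ → (κ)²₂. -/
def IsWeaklyCompact (κ : Cardinal.{0}) : Prop :=
  ℵ₀ < κ ∧ ∀ c : I κ → I κ → Bool, ∃ H : Set (I κ), #H = κ ∧
    ∃ b : Bool, ∀ i ∈ H, ∀ j ∈ H, i < j → c i j = b

/-- `S` is κ-meagre relative to `P` (in the subspace topology). -/
def MeagreInK (P S : Set (Sp κ A)) : Prop :=
  ∃ f : I κ → Set P,
    (∀ i, @IsNowhereDense _ (TopologicalSpace.induced Subtype.val (bt κ A)) (f i)) ∧
    {x : P | (x : Sp κ A) ∈ S} = ⋃ i, f i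

/-- Perfect set in the bounded topology. -/
def PerfK (P : Set (Sp κ A)) : Prop := @Perfect _ (bt κ A) P

/-- Perfectly κ-meagre set. -/
def PMeagreK (S : Set (Sp κ A)) : Prop := ∀ P, PerfK κ A P → MeagreInK κ A P S

/-- κ-λ-set. -/
def KLambdaSet (S : Set (Sp κ A)) : Prop :=
  ∀ B ⊆ S, #B ≤ κ → ∃ G : I κ → Set (Sp κ A),
    (∀ i, OpenK κ A (G i)) ∧ (⋂ i, G i) ∩ S = B

/-- κ-σ-set. -/
def KSigmaSet (S : Set (Sp κ A)) : Prop :=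
  ∀ F : I κ → Set (Sp κ A), (∀ i, ClosedK κ A (F i)) →
    ∃ G : I κ → Set (Sp κ A), (∀ i, OpenK κ A (G i)) ∧
      S ∩ (⋃ i, F i) = S ∩ (⋂ i, G i)

/-- κ-γ-set: every open (proper) κ-cover contains a κ-γ-subcover of size κ. -/
def KGammaSet (X : Set (Sp κ A)) : Prop :=
  ∀ 𝒰 : Set (Set (Sp κ A)), (∀ U ∈ 𝒰, OpenK κ A U) → X ∉ 𝒰 →
    (∀ C ⊆ X, #C < κ → ∃ U ∈ 𝒰, C ⊆ U) →
    ∃ U : I κ → Set (Sp κ A), (∀ α, U α ∈ 𝒰) ∧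
      X ⊆ ⋃ α, ⋂ β, ⋂ (_ : α < β), U β

/-- A (proper) open cover of `X` of size κ, indexed by `I κ`. -/
def IsOCovSeq (X : Set (Sp κ A)) (U : I κ → Set (Sp κ A)) : Prop :=
  (∀ α, OpenK κ A (U α)) ∧ (∀ α, U α ≠ X) ∧ X ⊆ ⋃ α, U α

/-- A (proper) κ-γ-cover of `X`, indexed by `I κ`. -/
def IsGammaCovSeq (X : Set (Sp κ A)) (U : I κ → Set (Sp κ A)) : Prop :=
  (∀ α, OpenK κ A (U α)) ∧ (∀ α, U α ≠ X) ∧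
    X ⊆ ⋃ α, ⋂ β, ⋂ (_ : α < β), U β

/-- The cover `U` is essentially of size κ: no subfamily of size `< κ` covers `X`. -/
def EssK (X : Set (Sp κ A)) (U : I κ → Set (Sp κ A)) : Prop :=
  ∀ s : Set (I κ), #s < κ → ¬ X ⊆ ⋃ β ∈ s, U β

/-- The selection principle `S₁^κ(Γ_κ, Γ_κ)`. -/
def S1GammaGamma (X : Set (Sp κ A)) : Prop :=
  ∀ 𝒰 : I κ → I κ → Set (Sp κ A), (∀ α, IsGammaCovSeq κ A X (𝒰 α)) →
    ∃ f : I κ → I κ, IsGammaCovSeq κ A X (fun α => 𝒰 α (f α))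

/-- The κ-Hurewicz property `U^κ_{<κ}(O_κ, Γ_κ)`. -/
def KHurewicz (X : Set (Sp κ A)) : Prop :=
  ∀ 𝒰 : I κ → I κ → Set (Sp κ A), (∀ α, IsOCovSeq κ A X (𝒰 α)) →
    (∀ α, EssK κ A X (𝒰 α)) →
    ∃ V : I κ → Set (I κ), (∀ α, #(V α) < κ) ∧
      IsGammaCovSeq κ A X (fun α => ⋃ β ∈ V α, 𝒰 α β)

/-- The κ-Menger property `U^κ_{<κ}(O_κ, O_κ)`. -/
def KMenger (X : Set (Sp κ A)) : Prop :=
  ∀ 𝒰 : I κ → I κ → Set (Sp κ A), (∀ α, IsOCovSeq κ A X (𝒰 α)) →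
    (∀ α, EssK κ A X (𝒰 α)) →
    ∃ V : I κ → Set (I κ), (∀ α, #(V α) < κ) ∧
      IsOCovSeq κ A X (fun α => ⋃ β ∈ V α, 𝒰 α β)

/-- The κ-Rothberger property `S₁^κ(O_κ, O_κ)`. -/
def KRothberger (X : Set (Sp κ A)) : Prop :=
  ∀ 𝒰 : I κ → I κ → Set (Sp κ A), (∀ α, IsOCovSeq κ A X (𝒰 α)) →
    ∃ f : I κ → I κ, IsOCovSeq κ A X (fun α => 𝒰 α (f α))

/-- Closed unbounded subset of `I κ`. -/
def IsClubK (S : Set (I κ)) : Prop :=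
  (∀ a : I κ, ∃ b ∈ S, a < b) ∧
  (∀ a : I κ, (∃ b, b < a) → (∀ b < a, ∃ c ∈ S, b < c ∧ c < a) → a ∈ S)

/-- Stationary subset of `I κ`. -/
def IsStatK (S : Set (I κ)) : Prop :=
  ∀ C : Set (I κ), IsClubK κ C → (S ∩ C).Nonempty

/-- The diamond principle `◇_κ(E)`. -/
def DiamondK (E : Set (I κ)) : Prop :=
  ∃ s : I κ → Set (I κ), (∀ α, s α ⊆ Iio α) ∧
    ∀ X : Set (I κ), IsStatK κ {α | α ∈ E ∧ X ∩ Iio α = s α}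

/-- The guessing principle `◇_κ(E, 2^κ, NS_κ)`. -/
def DiamondFunK (E : Set (I κ)) : Prop :=
  ∃ s : I κ → Sp κ Bool,
    ∀ x : Sp κ Bool, IsStatK κ {α | α ∈ E ∧ ∀ β < α, x β = s α β}

/-- `S` is `X`-small. -/
def XSmall (X : Set (I κ)) (S : Set (Sp κ A)) : Prop :=
  ∃ a : I κ → Sp κ A, S ⊆ ⋃ α ∈ X, cyl κ A (a α) α

/-- `S` is small in `A^κ`. -/
def SmallK (S : Set (Sp κ A)) : Prop :=
  ∃ lam : Cardinal, lam < κ ∧ ∀ α : I κ, ∃ T : Set (Sp κ A),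
    #T ≤ lam ∧ S ⊆ ⋃ x ∈ T, cyl κ A x α


variable {κ A}

lemma Inonempty (hk : Cardinal.aleph0 < κ) : Nonempty (I κ) := by
  rw [Ordinal.toType_nonempty_iff_ne_zero]
  simp only [ne_eq, Cardinal.ord_eq_zero]
  exact (Cardinal.aleph0_pos.trans hk).ne'

lemma InoMax (hk : Cardinal.aleph0 < κ) : NoMaxOrder (I κ) :=
  Cardinal.noMaxOrder hk.le

-- basis property
lemma exists_cyl_subset {U : Set (Sp κ A)} (hU : OpenK κ A U) (hk : Cardinal.aleph0 < κ)
    {x : Sp κ A} (hx : x ∈ U) : ∃ ξ, cyl κ A x ξ ⊆ U := by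
  induction hU with
  | basic S hS =>
      obtain ⟨z, ξ, rfl⟩ := hS
      exact ⟨ξ, fun y hy β hβ => (hy β hβ).trans (hx β hβ)⟩
  | univ =>
      obtain ⟨ξ⟩ := Inonempty hk
      exact ⟨ξ, fun _ _ => trivial⟩
  | inter s t _ _ ihs iht =>
      obtain ⟨ξ₁, h₁⟩ := ihs hx.1
      obtain ⟨ξ₂, h₂⟩ := iht hx.2
      refine ⟨max ξ₁ ξ₂, fun y hy => ⟨h₁ fun β hβ => hy β (lt_of_lt_of_le hβ (le_max_left _ _)),
        h₂ fun β hβ => hy β (lt_of_lt_of_le hβ (le_max_right _ _))⟩⟩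
  | sUnion S _ ih =>
      obtain ⟨s, hs, hxs⟩ := hx
      obtain ⟨ξ, hξ⟩ := ih s hs hxs
      exact ⟨ξ, hξ.trans (subset_sUnion_of_mem hs)⟩


lemma cyl_open (x : Sp κ A) (ξ : I κ) : OpenK κ A (cyl κ A x ξ) :=
  TopologicalSpace.GenerateOpen.basic _ ⟨x, ξ, rfl⟩

lemma singleton_closed (hk : Cardinal.aleph0 < κ) (x : Sp κ A) :
    @IsClosed _ (bt κ A) {x} := by
  letI := bt κ A
  have := InoMax (κ := κ) hk
  refine ⟨?_⟩
  rw [show ({x} : Set (Sp κ A))ᶜ = ⋃₀ {U | (∃ y ξ, U = cyl κ A y ξ) ∧ U ⊆ {x}ᶜ} by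
    ext y
    constructor
    · intro hy
      have hyx : y ≠ x := hy
      obtain ⟨β, hβ⟩ : ∃ β, y β ≠ x β := by
        by_contra h; push_neg at h; exact hyx (funext h)
      obtain ⟨ξ, hξ⟩ := exists_gt β
      refine ⟨cyl κ A y ξ, ⟨⟨y, ξ, rfl⟩, ?_⟩, fun γ _ => rfl⟩
      intro z hz hzx
      exact hβ ((hz β hξ).symm.trans (congrFun (mem_singleton_iff.mp hzx) β))
    · rintro ⟨U, ⟨_, hsub⟩, hyU⟩
      exact hsub hyU]
  exact isOpen_sUnion fun U hU => by
    obtain ⟨⟨z, ξ, rfl⟩, _⟩ := hU; exact cyl_open z ξ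

lemma singleton_nwd (hk : Cardinal.aleph0 < κ) (x : Sp κ Bool) :
    NwdK κ Bool {x} := by
  classical
  letI := bt κ Bool
  show interior (closure {x}) = ∅
  rw [(singleton_closed hk x).closure_eq]
  ext y
  simp only [mem_empty_iff_false, iff_false]
  intro hy
  have hopen : OpenK κ Bool (interior {x}) := isOpen_interior
  obtain ⟨ξ, hξ⟩ := exists_cyl_subset hopen hk hy
  have hxint : x = y := (interior_subset hy).symm
  subst hxint
  set x' : Sp κ Bool := Function.update x ξ (!(x ξ)) with hx'
  have hmem : x' ∈ cyl κ Bool x ξ := by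
    intro β hβ
    simp [hx', Function.update_of_ne (ne_of_lt hβ)]
  have : x' = x := mem_singleton_iff.mp (interior_subset (hξ hmem))
  have := congrFun this ξ
  simp [hx'] at this

lemma singleton_meagre (hk : Cardinal.aleph0 < κ) (x : Sp κ Bool) :
    MeagreK κ Bool {x} := by
  have := Inonempty (κ := κ) hk
  exact ⟨fun _ => {x}, fun _ => singleton_nwd hk x, by simp⟩





theorem stmt1 (κ lam : Cardinal.{0}) (hk : Cardinal.aleph0 < κ) (hreg : κ.IsRegular) (hpow : κ ^< κ = κ)
    (hlam : lam.IsRegular) (hkl : κ < lam) (hl2 : lam ≤ 2 ^ κ)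
    (L : Set (Sp κ Bool)) (hL1 : lam ≤ #L)
    (hL2 : ∀ X, MeagreK κ Bool X → #↥(L ∩ X) < lam) :
    #L ≤ covM κ Bool := by
  classical
  unfold covM
  set S := {c | ∃ 𝒜 : Set (Set (Sp κ Bool)), #𝒜 = c ∧ (∀ s ∈ 𝒜, MeagreK κ Bool s) ∧ ⋃₀ 𝒜 = Set.univ} with hS
  have hne : S.Nonempty := by
    refine ⟨_, Set.range (fun x : Sp κ Bool => ({x} : Set _)), rfl, ?_, ?_⟩
    · rintro s ⟨x, rfl⟩; exact singleton_meagre hk x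
    · ext y; simp
  obtain ⟨𝒜, hcard, hmeag, hcov⟩ := csInf_mem hne
  set cM := sInf S with hcM
  have hLeq : L = ⋃ s : 𝒜, (L ∩ (s : Set (Sp κ Bool))) := by
    ext y
    simp only [mem_iUnion, mem_inter_iff]
    constructor
    · intro hy
      have : y ∈ ⋃₀ 𝒜 := hcov ▸ mem_univ y
      obtain ⟨s, hs, hys⟩ := this
      exact ⟨⟨s, hs⟩, hy, hys⟩
    · rintro ⟨s, hy, _⟩; exact hy
  have hsum : #L ≤ Cardinal.sum fun s : 𝒜 => #↥(L ∩ (s : Set (Sp κ Bool))) := by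
    conv_lhs => rw [hLeq]
    exact mk_iUnion_le_sum_mk
  have hlt : ∀ s : 𝒜, #↥(L ∩ (s : Set (Sp κ Bool))) < lam :=
    fun s => hL2 _ (hmeag _ s.2)
  have hlamle : lam ≤ cM := by
    by_contra h
    push_neg at h
    have : #↥𝒜 < lam := by rwa [hcard]
    exact absurd (hL1.trans hsum) (not_le.mpr (sum_lt_of_isRegular hlam this hlt))
  have h2 : #L ≤ cM * lam := by
    calc #L ≤ Cardinal.sum fun s : 𝒜 => #↥(L ∩ (s : Set (Sp κ Bool))) := hsum
    _ ≤ Cardinal.sum fun _ : 𝒜 => lam := Cardinal.sum_le_sum _ _ fun s => (hlt s).le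
    _ = #↥𝒜 * lam := Cardinal.sum_const' _ _
    _ = cM * lam := by rw [hcard]
  have hinf : ℵ₀ ≤ cM := hlam.aleph0_le.trans hlamle
  rwa [Cardinal.mul_eq_max hinf hlam.aleph0_le, max_eq_left hlamle] at h2

end GenSp
end
end

section
/- Let κ be a weakly compact cardinal. If A ⊆ 2^κ is κ-strongly null, then for every κ-meagre set F ⊆ 2^κ there exists x ∈ 2^κ such that (x + A) ∩ F = ∅. -/
noncomputable section

open Cardinal Set

namespace GenSp

variable (κ : Cardinal.{0}) (A : Type)

section Aux

variable {κ : Cardinal.{0}}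

/-- Generic transfinite recursion with choice. -/
theorem exists_fix {α C : Type} [LinearOrder α] [WellFoundedLT α] (c₀ : C)
    (P : α → (α → C) → C → Prop)
    (hP : ∀ n g g', (∀ m < n, g m = g' m) → ∀ c, P n g c → P n g' c)
    (hex : ∀ n g, ∃ c, P n g c) : ∃ F : α → C, ∀ n, P n F (F n) := by
  classical
  let F : α → C := (IsWellFounded.fix ((· < ·) : α → α → Prop)
    (fun n prev => (hex n (fun m => if h : m < n then prev m h else c₀)).choose))
  refine ⟨F, fun n => ?_⟩
  have hun : F n = (hex n (fun m => if h : m < n then F m else c₀)).choose := by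
    exact IsWellFounded.fix_eq _ _ _
  have hspec := (hex n (fun m => if h : m < n then F m else c₀)).choose_spec
  rw [← hun] at hspec
  exact hP n _ F (fun m hm => by simp [hm]) _ hspec

theorem mk_I (κ : Cardinal.{0}) : #(I κ) = κ := Cardinal.mk_ord_toType κ

theorem mk_Iio_lt (i : I κ) : #(Set.Iio i) < κ := Cardinal.mk_Iio_ord_toType i

theorem mk_Iic_lt (hκ : ℵ₀ < κ) (i : I κ) : #(Set.Iic i) < κ := by
  have h1 : (Set.Iic i) = insert i (Set.Iio i) := by
    ext x; simp [le_iff_lt_or_eq, or_comm]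
  rw [h1]
  calc #(insert i (Set.Iio i) : Set (I κ)) ≤ #(Set.Iio i) + 1 := Cardinal.mk_insert_le
    _ < κ := Cardinal.add_lt_of_lt hκ.le (mk_Iio_lt i) (lt_trans Cardinal.one_lt_aleph0 hκ)

/-- Small sets are strictly bounded. -/
theorem bounded_of_small (hwc : IsWeaklyCompact κ) (T : Set (I κ)) (hT : #T < κ) :
    ∃ b : I κ, ∀ t ∈ T, t < b := by
  classical
  -- first get a non-strict bound
  have hub : ∃ b : I κ, ∀ t ∈ T, t ≤ b := by
    by_contra hc
    push_neg at hc
    choose g hg1 hg2 using fun b => hc b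
    have hgb : ∀ b, b ≤ g b := fun b => (hg2 b).le
    obtain ⟨H, hH, b, hom⟩ := hwc.2 (fun i j => if g i = g j then true else false)
    have hHne : H.Nonempty := by
      rw [← Set.nonempty_coe_sort, ← Cardinal.mk_ne_zero_iff, hH]
      exact fun h => (lt_irrefl (0:Cardinal) (h ▸ (Cardinal.aleph0_pos.trans hwc.1)))
    obtain ⟨i₀, hi₀⟩ := hHne
    cases b with
    | true =>
      have homEq : ∀ i ∈ H, ∀ j ∈ H, i < j → g i = g j := by
        intro i hi j hj hij
        have := hom i hi j hj hij
        by_contra hne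
        simp only [if_neg hne] at this
        exact Bool.false_ne_true this
      have hconst : ∀ j ∈ H, g j = g i₀ := by
        intro j hj
        rcases lt_trichotomy i₀ j with h | h | h
        · exact (homEq i₀ hi₀ j hj h).symm
        · rw [h]
        · exact homEq j hj i₀ hi₀ h
      have hsub : H ⊆ Set.Iic (g i₀) := fun j hj => (hconst j hj ▸ hgb j : j ≤ g i₀)
      have := (Cardinal.mk_le_mk_of_subset hsub).trans_lt (mk_Iic_lt hwc.1 (g i₀))
      rw [hH] at this; exact lt_irrefl _ this
    | false =>
      have hinj : Set.InjOn g H := by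
        intro i hi j hj hij
        by_contra hne
        rcases lt_trichotomy i j with h | h | h
        · have := hom i hi j hj h; simp [hij] at this
        · exact hne h
        · have := hom j hj i hi h; simp [hij] at this
      have h1 : #H = #(g '' H) := (Cardinal.mk_image_eq_of_injOn g H hinj).symm
      have h2 : g '' H ⊆ T := by rintro x ⟨i, _, rfl⟩; exact hg1 i
      have : κ < κ := by
        calc κ = #H := hH.symm
          _ = #(g '' H) := h1
          _ ≤ #T := Cardinal.mk_le_mk_of_subset h2
          _ < κ := hT
      exact lt_irrefl _ this
  obtain ⟨b, hb⟩ := hub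
  have : ∃ c, b < c := by
    by_contra hc
    push_neg at hc
    have : (Set.univ : Set (I κ)) = Set.Iic b := by
      ext x; simp [hc x]
    have h2 := mk_Iic_lt hwc.1 b
    rw [← this, Cardinal.mk_univ, mk_I] at h2
    exact lt_irrefl _ h2
  obtain ⟨c, hbc⟩ := this
  exact ⟨c, fun t ht => lt_of_le_of_lt (hb t ht) hbc⟩

end Aux
section Top

variable {κ : Cardinal.{0}}

theorem mem_cyl_self (z : Sp κ Bool) (ξ : I κ) : z ∈ cyl κ Bool z ξ := fun _ _ => rfl

theorem cyl_subset_of_mem {z x : Sp κ Bool} {ξ : I κ} (h : z ∈ cyl κ Bool x ξ) :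
    cyl κ Bool z ξ ⊆ cyl κ Bool x ξ := fun y hy β hβ => (hy β hβ).trans (h β hβ)

theorem cyl_mono {z : Sp κ Bool} {ξ ξ' : I κ} (h : ξ ≤ ξ') :
    cyl κ Bool z ξ' ⊆ cyl κ Bool z ξ := fun y hy β hβ => hy β (lt_of_lt_of_le hβ h)

theorem exists_cyl_subset_s6 (hne : Nonempty (I κ)) {U : Set (Sp κ Bool)} (hU : OpenK κ Bool U)
    {z : Sp κ Bool} (hz : z ∈ U) : ∃ ξ, cyl κ Bool z ξ ⊆ U := by
  induction hU with
  | basic s hs =>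
    obtain ⟨x, ξ, rfl⟩ := hs
    exact ⟨ξ, cyl_subset_of_mem hz⟩
  | univ => exact ⟨hne.some, fun _ _ => trivial⟩
  | inter s t _ _ ih1 ih2 =>
    obtain ⟨ξ1, h1⟩ := ih1 hz.1
    obtain ⟨ξ2, h2⟩ := ih2 hz.2
    exact ⟨max ξ1 ξ2, fun y hy => ⟨h1 (cyl_mono (le_max_left _ _) hy),
      h2 (cyl_mono (le_max_right _ _) hy)⟩⟩
  | sUnion 𝒮 _ ih =>
    obtain ⟨s, hs, hzs⟩ := hz
    obtain ⟨ξ, h⟩ := ih s hs hzs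
    exact ⟨ξ, fun y hy => ⟨s, hs, h hy⟩⟩

theorem openK_cyl (z : Sp κ Bool) (ξ : I κ) : OpenK κ Bool (cyl κ Bool z ξ) :=
  TopologicalSpace.GenerateOpen.basic _ ⟨z, ξ, rfl⟩

/-- From a nowhere dense set, inside every cylinder there is a subcylinder avoiding it. -/
theorem avoid (hne : Nonempty (I κ)) {f : Set (Sp κ Bool)} (hf : NwdK κ Bool f) (z : Sp κ Bool) (η : I κ) :
    ∃ w ℓ, (∀ γ < η, w γ = z γ) ∧ cyl κ Bool w ℓ ∩ f = ∅ := by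
  letI := bt κ Bool
  have hcl : ¬ cyl κ Bool z η ⊆ closure f := by
    intro hsub
    have h1 : cyl κ Bool z η ⊆ interior (closure f) :=
      interior_maximal hsub (openK_cyl z η)
    rw [hf] at h1
    exact h1 (mem_cyl_self z η)
  obtain ⟨w, hw1, hw2⟩ := Set.not_subset.mp hcl
  have hop : OpenK κ Bool (closure f)ᶜ := isClosed_closure.isOpen_compl
  obtain ⟨ℓ, hℓ⟩ := exists_cyl_subset_s6 hne hop hw2
  refine ⟨w, ℓ, hw1, ?_⟩
  rw [Set.eq_empty_iff_forall_notMem]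
  exact fun y hy => hℓ hy.1 (subset_closure hy.2)

end Top
section Sier

variable {κ : Cardinal.{0}}

/-- Functions supported below `η`. -/
def Vset (κ : Cardinal.{0}) (η : I κ) : Set (Sp κ Bool) := {g | ∀ γ, ¬ γ < η → g γ = false}

/-- Truncation below `η`. -/
def trunc (η : I κ) (z : Sp κ Bool) : Sp κ Bool := fun γ => if γ < η then z γ else false

theorem trunc_mem (η : I κ) (z : Sp κ Bool) : trunc η z ∈ Vset κ η := by
  intro γ hγ; simp [trunc, hγ]

theorem trunc_eq (η : I κ) (z : Sp κ Bool) {γ : I κ} (h : γ < η) : trunc η z γ = z γ := by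
  simp [trunc, h]

/-- Lexicographic comparison. -/
def flt (f g : Sp κ Bool) : Prop :=
  ∃ γ, (∀ β < γ, f β = g β) ∧ f γ = false ∧ g γ = true

theorem flt_asymm {f g : Sp κ Bool} (h1 : flt f g) (h2 : flt g f) : False := by
  obtain ⟨γ1, ha1, hb1, hc1⟩ := h1
  obtain ⟨γ2, ha2, hb2, hc2⟩ := h2
  rcases lt_trichotomy γ1 γ2 with h | h | h
  · have h2 := ha2 γ1 h
    rw [hb1] at h2
    rw [h2] at hc1
    exact Bool.false_ne_true hc1
  · subst h
    rw [hb1] at hc2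
    exact Bool.false_ne_true hc2
  · have h2 := ha1 γ2 h
    rw [hb2] at h2
    rw [h2] at hc2
    exact Bool.false_ne_true hc2

theorem flt_total {f g : Sp κ Bool} (h : f ≠ g) : flt f g ∨ flt g f := by
  have hD : {γ | f γ ≠ g γ}.Nonempty := by
    by_contra hc
    rw [Set.not_nonempty_iff_eq_empty] at hc
    exact h (funext fun γ => by_contra fun hγ => by
      have : γ ∈ {γ | f γ ≠ g γ} := hγ
      simp [hc] at this)
  set wf := (IsWellFounded.wf (α := I κ) (r := (· < ·)))
  set γ0 := wf.min _ hD with hγ0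
  have hmem : f γ0 ≠ g γ0 := wf.min_mem _ hD
  have hagree : ∀ β < γ0, f β = g β := by
    intro β hβ
    by_contra hc
    exact wf.not_lt_min _ hc hβ
  cases hf : f γ0 <;> cases hg : g γ0
  · rw [hf, hg] at hmem; exact absurd rfl hmem
  · exact Or.inl ⟨γ0, hagree, hf, hg⟩
  · exact Or.inr ⟨γ0, fun β hβ => (hagree β hβ).symm, hg, hf⟩
  · rw [hf, hg] at hmem; exact absurd rfl hmem

theorem mk_Vset_lt (hwc : IsWeaklyCompact κ) : ∀ η : I κ, #(Vset κ η) < κ := by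
  classical
  intro η
  induction η using WellFoundedLT.induction with
  | _ η IH =>
  by_contra hcon
  push_neg at hcon
  have hemb : Nonempty (I κ ↪ ↥(Vset κ η)) := by
    rw [← Cardinal.le_def, mk_I]; exact hcon
  obtain ⟨e⟩ := hemb
  set E : I κ → Sp κ Bool := fun i => (e i).1 with hE
  have hEinj : Function.Injective E := fun i j h => e.injective (Subtype.ext h)
  have hEV : ∀ i, E i ∈ Vset κ η := fun i => (e i).2
  obtain ⟨H, hH, b, hom⟩ := hwc.2 (fun i j => if flt (E i) (E j) then true else false)
  have homd : ∀ i ∈ H, ∀ j ∈ H, i < j →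
      (b = true → flt (E i) (E j)) ∧ (b = false → flt (E j) (E i)) := by
    intro i hi j hj hij
    have hc := hom i hi j hj hij
    constructor
    · intro hb
      rw [hb] at hc
      by_contra hn
      rw [if_neg hn] at hc
      exact Bool.false_ne_true hc
    · intro hb
      rw [hb] at hc
      have hnot : ¬ flt (E i) (E j) := by
        intro hfl
        rw [if_pos hfl] at hc
        exact Bool.false_ne_true hc.symm
      exact Or.resolve_left (flt_total (fun hEq => (ne_of_lt hij) (hEinj hEq))) hnot
  have hUnb : ∀ i : I κ, {j | j ∈ H ∧ i < j}.Nonempty := by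
    intro i
    by_contra hc
    rw [Set.not_nonempty_iff_eq_empty] at hc
    have hsub : H ⊆ Set.Iic i := by
      intro j hj
      by_contra hji
      have : j ∈ {j | j ∈ H ∧ i < j} := ⟨hj, lt_of_not_ge hji⟩
      simp [hc] at this
    have := (Cardinal.mk_le_mk_of_subset hsub).trans_lt (mk_Iic_lt hwc.1 i)
    rw [hH] at this
    exact lt_irrefl _ this
  set wf := (IsWellFounded.wf (α := I κ) (r := (· < ·))) with hwf
  set nxt : I κ → I κ := fun i => wf.min {j | j ∈ H ∧ i < j} (hUnb i) with hnxt
  have hnxtH : ∀ i, nxt i ∈ H := fun i => (wf.min_mem _ (hUnb i)).1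
  have hlt_nxt : ∀ i, i < nxt i := fun i => (wf.min_mem _ (hUnb i)).2
  have hnxt_le : ∀ i j, j ∈ H → i < j → nxt i ≤ j := by
    intro i j hj hij
    exact le_of_not_gt (wf.not_lt_min {j | j ∈ H ∧ i < j} (x := j) ⟨hj, hij⟩)
  set W : I κ → I κ → Prop :=
    fun i γ => (∀ β < γ, E i β = E (nxt i) β) ∧ E i γ = !b ∧ E (nxt i) γ = b with hWdef
  have hWex : ∀ i ∈ H, ∃ γ, W i γ := by
    intro i hi
    cases hb : b
    · obtain ⟨γ, ha, h1, h2⟩ := (homd i hi (nxt i) (hnxtH i) (hlt_nxt i)).2 hb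
      refine ⟨γ, fun β hβ => (ha β hβ).symm, ?_, ?_⟩
      · rw [hb]; simpa using h2
      · rw [hb]; exact h1
    · obtain ⟨γ, ha, h1, h2⟩ := (homd i hi (nxt i) (hnxtH i) (hlt_nxt i)).1 hb
      refine ⟨γ, ha, ?_, ?_⟩
      · rw [hb]; simpa using h1
      · rw [hb]; exact h2
  set δ : I κ → I κ := fun i => if h : ∃ γ, W i γ then h.choose else i with hδdef
  have hWδ : ∀ i ∈ H, W i (δ i) := by
    intro i hi
    have h := hWex i hi
    simp only [hδdef, dif_pos h]
    exact h.choose_spec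
  have hδη : ∀ i ∈ H, δ i < η := by
    intro i hi
    by_contra hc
    have h1 := (hWδ i hi).2.1
    have h2 := (hWδ i hi).2.2
    have h3 := hEV i (δ i) hc
    have h4 := hEV (nxt i) (δ i) hc
    cases b
    · rw [h3] at h1; simp at h1
    · rw [h4] at h2; simp at h2
  have key : ∃ δ₀, δ₀ < η ∧ κ ≤ #({i | i ∈ H ∧ δ i = δ₀} : Set (I κ)) := by
    by_contra hk
    push_neg at hk
    have hbdex := fun (γ : ↥(Set.Iio η)) =>
      bounded_of_small hwc {i | i ∈ H ∧ δ i = γ.1} (hk γ.1 γ.2)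
    choose bd hbd using hbdex
    obtain ⟨Bstar, hBstar⟩ := bounded_of_small hwc (Set.range bd)
      (Cardinal.mk_range_le.trans_lt (mk_Iio_lt η))
    have hsub : H ⊆ Set.Iio Bstar := by
      intro i hi
      have hγ : δ i < η := hδη i hi
      have h1 : i < bd ⟨δ i, hγ⟩ := hbd ⟨δ i, hγ⟩ i ⟨hi, rfl⟩
      exact h1.trans (hBstar _ (Set.mem_range_self _))
    have := (Cardinal.mk_le_mk_of_subset hsub).trans_lt (mk_Iio_lt Bstar)
    rw [hH] at this
    exact lt_irrefl _ this
  obtain ⟨δ₀, hδ₀, hbig⟩ := key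
  set F₀ : Set (I κ) := {i | i ∈ H ∧ δ i = δ₀} with hF₀
  have hker : ∀ i j : I κ, i ∈ F₀ → j ∈ F₀ → i < j →
      trunc δ₀ (E i) = trunc δ₀ (E j) → False := by
    rintro i j ⟨hiH, hiδ⟩ ⟨hjH, hjδ⟩ hij heq
    have hagr : ∀ β < δ₀, E i β = E j β := by
      intro β hβ
      have := congrFun heq β
      rwa [trunc_eq _ _ hβ, trunc_eq _ _ hβ] at this
    have Wi := hWδ i hiH
    rw [hiδ] at Wi
    have Wj := hWδ j hjH
    rw [hjδ] at Wj
    have hle : nxt i ≤ j := hnxt_le i j hjH hij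
    rcases eq_or_lt_of_le hle with hEq | hLt
    · have h1 : E (nxt i) δ₀ = b := Wi.2.2
      have h2 : E j δ₀ = !b := Wj.2.1
      rw [hEq] at h1
      rw [h1] at h2
      cases b <;> simp at h2
    · have hagr2 : ∀ β < δ₀, E j β = E (nxt i) β := by
        intro β hβ
        rw [← hagr β hβ]
        exact Wi.1 β hβ
      cases hb : b
      · -- b = false : E (nxt i) δ₀ = false, E j δ₀ = true
        have f1 : flt (E (nxt i)) (E j) :=
          ⟨δ₀, fun β hβ => (hagr2 β hβ).symm, by rw [Wi.2.2, hb], by rw [Wj.2.1, hb]; rfl⟩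
        have f2 : flt (E j) (E (nxt i)) :=
          (homd (nxt i) (hnxtH i) j hjH hLt).2 hb
        exact flt_asymm f1 f2
      · -- b = true : E j δ₀ = false, E (nxt i) δ₀ = true
        have f1 : flt (E j) (E (nxt i)) :=
          ⟨δ₀, hagr2, by rw [Wj.2.1, hb]; rfl, by rw [Wi.2.2, hb]⟩
        have f2 : flt (E (nxt i)) (E j) :=
          (homd (nxt i) (hnxtH i) j hjH hLt).1 hb
        exact flt_asymm f1 f2
  have rinj : Function.Injective
      (fun i : ↥F₀ => (⟨trunc δ₀ (E i.1), trunc_mem δ₀ (E i.1)⟩ : ↥(Vset κ δ₀))) := by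
    intro i j hij
    have heq : trunc δ₀ (E i.1) = trunc δ₀ (E j.1) := congrArg Subtype.val hij
    rcases lt_trichotomy i.1 j.1 with h | h | h
    · exact absurd heq (fun heq => hker i.1 j.1 i.2 j.2 h heq)
    · exact Subtype.ext h
    · exact absurd heq.symm (fun heq => hker j.1 i.1 j.2 i.2 h heq)
  have hchain : κ < κ := by
    calc κ ≤ #F₀ := hbig
      _ ≤ #(Vset κ δ₀) := Cardinal.mk_le_of_injective rinj
      _ < κ := IH δ₀ hδ₀
  exact lt_irrefl _ hchain

end Sier
section Main

variable {κ : Cardinal.{0}}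

theorem I_nonempty (hwc : IsWeaklyCompact κ) : Nonempty (I κ) := by
  rw [← Cardinal.mk_ne_zero_iff, mk_I]
  exact ne_of_gt (Cardinal.aleph0_pos.trans hwc.1)

theorem avoidBound (hwc : IsWeaklyCompact κ) {f : Set (Sp κ Bool)} (hf : NwdK κ Bool f)
    (η : I κ) : ∃ β : I κ, ∀ z : Sp κ Bool, ∃ w ℓ, ℓ < β ∧ (∀ γ < η, w γ = z γ) ∧
      cyl κ Bool w ℓ ∩ f = ∅ := by
  have hne := I_nonempty hwc
  choose w ℓ hw hcyl using fun r : ↥(Vset κ η) => avoid hne hf r.1 η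
  obtain ⟨β, hβ⟩ := bounded_of_small hwc (Set.range ℓ)
    (Cardinal.mk_range_le.trans_lt (mk_Vset_lt hwc η))
  refine ⟨β, fun z => ?_⟩
  set r : ↥(Vset κ η) := ⟨trunc η z, trunc_mem η z⟩ with hr
  refine ⟨w r, ℓ r, hβ _ (Set.mem_range_self _), fun γ hγ => ?_, hcyl r⟩
  rw [hw r γ hγ]
  exact trunc_eq η z hγ

theorem exists_kseq (hwc : IsWeaklyCompact κ) (f : I κ → Set (Sp κ Bool))
    (hf : ∀ m, NwdK κ Bool (f m)) (p : I κ → I κ) :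
    ∃ K k : I κ → I κ, ∀ n, (∀ m < n, k m < K n) ∧ n < K n ∧ K n < k n ∧
      (∀ z : Sp κ Bool, ∃ w : Sp κ Bool, ∃ ℓ : I κ, ℓ < k n ∧ (∀ γ < K n, w γ = z γ) ∧
        cyl κ Bool w ℓ ∩ f (p n) = ∅) := by
  have hne := I_nonempty hwc
  set P : I κ → (I κ → I κ × I κ) → I κ × I κ → Prop := fun n g c =>
    (∀ m < n, (g m).2 < c.1) ∧ n < c.1 ∧ c.1 < c.2 ∧
      (∀ z : Sp κ Bool, ∃ w : Sp κ Bool, ∃ ℓ : I κ, ℓ < c.2 ∧ (∀ γ < c.1, w γ = z γ) ∧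
        cyl κ Bool w ℓ ∩ f (p n) = ∅) with hP
  have hPmono : ∀ n g g', (∀ m < n, g m = g' m) → ∀ c, P n g c → P n g' c := by
    intro n g g' hgg c hc
    exact ⟨fun m hm => (hgg m hm) ▸ hc.1 m hm, hc.2⟩
  have hPex : ∀ n g, ∃ c, P n g c := by
    intro n g
    have hT : #(Set.range (fun m : ↥(Set.Iio n) => (g m.1).2)) < κ :=
      Cardinal.mk_range_le.trans_lt (mk_Iio_lt n)
    have hT2 : #(insert n (Set.range (fun m : ↥(Set.Iio n) => (g m.1).2)) : Set (I κ)) < κ :=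
      Cardinal.mk_insert_le.trans_lt
        (Cardinal.add_lt_of_lt hwc.1.le hT (lt_trans Cardinal.one_lt_aleph0 hwc.1))
    obtain ⟨K, hK⟩ := bounded_of_small hwc _ hT2
    obtain ⟨β, hβ⟩ := avoidBound hwc (hf (p n)) K
    have hpair : #({K, β} : Set (I κ)) < κ := by
      refine Cardinal.mk_insert_le.trans_lt (Cardinal.add_lt_of_lt hwc.1.le ?_
        (lt_trans Cardinal.one_lt_aleph0 hwc.1))
      rw [Cardinal.mk_singleton]
      exact lt_trans Cardinal.one_lt_aleph0 hwc.1
    obtain ⟨k', hk'⟩ := bounded_of_small hwc _ hpair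
    refine ⟨(K, k'), fun m hm => ?_, ?_, ?_, fun z => ?_⟩
    · exact hK _ (Set.mem_insert_of_mem _ ⟨⟨m, hm⟩, rfl⟩)
    · exact hK _ (Set.mem_insert _ _)
    · exact hk' K (Set.mem_insert _ _)
    · obtain ⟨w, ℓ, hℓ, hagr, hcyl⟩ := hβ z
      exact ⟨w, ℓ, hℓ.trans (hk' β (Set.mem_insert_of_mem _ rfl)), hagr, hcyl⟩
  obtain ⟨F, hF⟩ := exists_fix (hne.some, hne.some) P hPmono hPex
  exact ⟨fun n => (F n).1, fun n => (F n).2, fun n =>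
    ⟨(hF n).1, (hF n).2.1, (hF n).2.2.1, (hF n).2.2.2⟩⟩

theorem xadd_xadd (x y : Sp κ Bool) : xadd κ (xadd κ x y) y = x := by
  funext i
  simp [xadd, Bool.xor_assoc]

theorem exists_tseq (hwc : IsWeaklyCompact κ) (f : I κ → Set (Sp κ Bool)) (p : I κ → I κ)
    (K k : I κ → I κ) (a : I κ → Sp κ Bool)
    (hKk : ∀ n, (∀ m < n, k m < K n) ∧ n < K n ∧ K n < k n ∧
      (∀ z : Sp κ Bool, ∃ w : Sp κ Bool, ∃ ℓ : I κ, ℓ < k n ∧ (∀ γ < K n, w γ = z γ) ∧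
        cyl κ Bool w ℓ ∩ f (p n) = ∅)) :
    ∃ t : I κ → Sp κ Bool, ∀ n,
      (∀ γ, (∃ m, m < n ∧ γ < k m) → ∃ m, m < n ∧ γ < k m ∧ t n γ = t m γ) ∧
      ∃ ℓ, ℓ < k n ∧ cyl κ Bool (xadd κ (t n) (a n)) ℓ ∩ f (p n) = ∅ := by
  classical
  set P : I κ → (I κ → Sp κ Bool) → Sp κ Bool → Prop := fun n g tv =>
    (∀ γ, (∃ m, m < n ∧ γ < k m) → ∃ m, m < n ∧ γ < k m ∧ tv γ = g m γ) ∧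
    ∃ ℓ, ℓ < k n ∧ cyl κ Bool (xadd κ tv (a n)) ℓ ∩ f (p n) = ∅ with hPdef
  have hPmono : ∀ n g g', (∀ m < n, g m = g' m) → ∀ c, P n g c → P n g' c := by
    intro n g g' hgg c hc
    refine ⟨fun γ hγ => ?_, hc.2⟩
    obtain ⟨m, hm1, hm2, hm3⟩ := hc.1 γ hγ
    exact ⟨m, hm1, hm2, hm3.trans (by rw [hgg m hm1])⟩
  have hPex : ∀ n g, ∃ c, P n g c := by
    intro n g
    set z₀ : Sp κ Bool := fun γ => if h : ∃ m, m < n ∧ γ < k m then g h.choose γ else false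
      with hz₀
    obtain ⟨w, ℓ, hℓ, hagr, hcyl⟩ := (hKk n).2.2.2 (xadd κ z₀ (a n))
    refine ⟨xadd κ w (a n), fun γ hγ => ?_, ℓ, hℓ, ?_⟩
    · obtain ⟨hm1, hm2⟩ := hγ.choose_spec
      refine ⟨hγ.choose, hm1, hm2, ?_⟩
      have hγK : γ < K n := lt_trans hm2 ((hKk n).1 _ hm1)
      have hw : w γ = xor (z₀ γ) (a n γ) := hagr γ hγK
      have hz : z₀ γ = g hγ.choose γ := dif_pos hγ
      show xor (w γ) (a n γ) = g hγ.choose γ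
      rw [hw, ← hz, Bool.xor_assoc, Bool.xor_self, Bool.xor_false]
    · rw [xadd_xadd]
      exact hcyl
  obtain ⟨t, ht⟩ := exists_fix (fun _ => false) P hPmono hPex
  exact ⟨t, fun n => ⟨(ht n).1, (ht n).2⟩⟩

end Main
theorem stmt6 (κ : Cardinal.{0}) (hwc : IsWeaklyCompact κ)
    (S : Set (Sp κ Bool)) (hS : SNullK κ Bool S) :
    ∀ F, MeagreK κ Bool F → ∃ x, (xadd κ x '' S) ∩ F = ∅ := by
  classical
  intro F hF
  obtain ⟨f, hnwd, hFeq⟩ := hF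
  -- pairing
  have hmkprod : #(I κ × I κ) = #(I κ) := by
    rw [Cardinal.mk_prod]
    simp only [Cardinal.lift_id, mk_I]
    exact Cardinal.mul_eq_self hwc.1.le
  obtain ⟨c⟩ := Cardinal.eq.mp hmkprod.symm
  set p : I κ → I κ := fun n => (c n).1 with hp
  obtain ⟨K, k, hKk⟩ := exists_kseq hwc f hnwd p
  -- covers
  choose A hA using fun m : I κ => hS (fun α => k (c.symm (m, α)))
  set a : I κ → Sp κ Bool := fun n => A (c n).1 (c n).2 with ha
  have hcover : ∀ y ∈ S, ∀ m : I κ, ∃ n, p n = m ∧ y ∈ cyl κ Bool (a n) (k n) := by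
    intro y hy m
    obtain ⟨U, ⟨α, rfl⟩, hyU⟩ := hA m hy
    refine ⟨c.symm (m, α), ?_, ?_⟩
    · rw [hp]; simp
    · simpa [ha, Equiv.apply_symm_apply] using hyU
  obtain ⟨t, ht⟩ := exists_tseq hwc f p K k a hKk
  -- coherence
  have hcoh : ∀ n m, m < n → ∀ γ, γ < k m → t n γ = t m γ := by
    intro n
    induction n using WellFoundedLT.induction with
    | _ n IH =>
    intro m hmn γ hγ
    obtain ⟨m₀, hm₀n, hγm₀, heq⟩ := (ht n).1 γ ⟨m, hmn, hγ⟩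
    rcases lt_trichotomy m₀ m with h | h | h
    · rw [heq, ← IH m hmn m₀ h γ hγm₀]
    · rw [heq, h]
    · rw [heq, IH m₀ hm₀n m h γ hγ]
  set x : Sp κ Bool := fun γ => t γ γ with hx
  have hkself : ∀ γ : I κ, γ < k γ := fun γ => lt_trans (hKk γ).2.1 (hKk γ).2.2.1
  have hxt : ∀ n γ, γ < k n → x γ = t n γ := by
    intro n γ hγ
    rcases lt_trichotomy γ n with h | h | h
    · exact (hcoh n γ h γ (hkself γ)).symm
    · rw [hx, h]
    · exact hcoh γ n h γ hγ
  refine ⟨x, ?_⟩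
  rw [Set.eq_empty_iff_forall_notMem]
  rintro z ⟨⟨y, hyS, rfl⟩, hzF⟩
  rw [hFeq, Set.mem_iUnion] at hzF
  obtain ⟨m, hm⟩ := hzF
  obtain ⟨n, hpn, hycyl⟩ := hcover y hyS m
  obtain ⟨ℓ, hℓ, hcylemp⟩ := (ht n).2
  have hmem : xadd κ x y ∈ cyl κ Bool (xadd κ (t n) (a n)) ℓ := by
    intro γ hγ
    have hγk : γ < k n := lt_trans hγ hℓ
    show xor (x γ) (y γ) = xor (t n γ) (a n γ)
    rw [hxt n γ hγk, hycyl γ hγk]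
  have : xadd κ x y ∈ cyl κ Bool (xadd κ (t n) (a n)) ℓ ∩ f (p n) := ⟨hmem, hpn ▸ hm⟩
  rw [hcylemp] at this
  exact this

end GenSp
end
end
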